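/- If G and H are finite connected graphs, then the monophonic position number of the Cartesian product satisfies mp(G □ H) ≤ max{mp(G), mp(H)}. -/

import Mathlib

open SimpleGraph

/-- A walk is *monophonic* if it is an induced path: it is a path and the only
edges of the graph between vertices of the walk are the edges of the walk. -/
def SimpleGraph.Walk.IsMonophonic {V : Type*} {G : SimpleGraph V} {u v : V}
    (p : G.Walk u v) : Prop :=
  p.IsPath ∧ ∀ a b : V, a ∈ p.support → b ∈ p.support → G.Adj a b → p.toSubgraph.Adj a b

/-- A set `S` is a *monophonic position set* if no monophonic path contains
more than two vertices of `S`. -/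
def SimpleGraph.IsMPSet {V : Type*} (G : SimpleGraph V) (S : Set V) : Prop :=
  ∀ ⦃u v : V⦄ (p : G.Walk u v), p.IsMonophonic → ({x ∈ S | x ∈ p.support}).ncard ≤ 2

/-- The *monophonic position number*: the largest cardinality of a monophonic
position set. -/
noncomputable def SimpleGraph.mpNum {V : Type*} (G : SimpleGraph V) : ℕ :=
  sSup {n | ∃ S : Set V, G.IsMPSet S ∧ S.ncard = n}

namespace SimpleGraph

namespace Walk

variable {V : Type*} {G : SimpleGraph V}

lemma toSubgraph_adj_iff_mem_edges {u v a b : V} (p : G.Walk u v) :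
    p.toSubgraph.Adj a b ↔ s(a, b) ∈ p.edges := by
  rw [← Subgraph.mem_edgeSet, mem_edges_toSubgraph]

lemma IsMonophonic.nil' {u : V} : (Walk.nil : G.Walk u u).IsMonophonic := by
  refine ⟨IsPath.nil, ?_⟩
  intro a b ha hb hadj
  simp only [support_nil, List.mem_singleton] at ha hb
  subst ha; subst hb
  exact absurd hadj (G.irrefl)

lemma IsMonophonic.reverse {u v : V} {p : G.Walk u v} (h : p.IsMonophonic) :
    p.reverse.IsMonophonic := by
  refine ⟨h.1.reverse, ?_⟩
  intro a b ha hb hadj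
  rw [support_reverse, List.mem_reverse] at ha hb
  rw [toSubgraph_reverse]
  exact h.2 a b ha hb hadj

lemma IsPath.eq_junction {u v w : V} {p : G.Walk u v} {q : G.Walk v w}
    (h : (p.append q).IsPath) {x : V} (hxp : x ∈ p.support) (hxq : x ∈ q.support) : x = v := by
  by_contra hne
  have hnd := (isPath_def _).mp h
  rw [support_append] at hnd
  have hxt : x ∈ q.support.tail := by
    have := q.support_eq_cons
    rw [this, List.mem_cons] at hxq
    rcases hxq with h1 | h1
    · exact absurd h1 hne
    · exact h1
  exact (List.disjoint_of_nodup_append hnd) hxp hxt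

lemma isPath_append_of {u v w : V} {p : G.Walk u v} {q : G.Walk v w}
    (hp : p.IsPath) (hq : q.IsPath) (hint : ∀ x, x ∈ p.support → x ∈ q.support → x = v) :
    (p.append q).IsPath := by
  rw [isPath_def, support_append]
  refine List.Nodup.append ((isPath_def _).mp hp) ?_ ?_
  · have := (isPath_def _).mp hq
    rw [q.support_eq_cons] at this
    exact this.of_cons
  · intro x hxp hxt
    have hxq : x ∈ q.support := by rw [q.support_eq_cons]; exact List.mem_cons_of_mem _ hxt
    have hxv := hint x hxp hxq
    subst hxv
    have := (isPath_def _).mp hq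
    rw [q.support_eq_cons] at this
    exact (List.nodup_cons.mp this).1 hxt

lemma IsMonophonic.of_append_left {u v w : V} {p : G.Walk u v} {q : G.Walk v w}
    (h : (p.append q).IsMonophonic) : p.IsMonophonic := by
  refine ⟨h.1.of_append_left, ?_⟩
  intro a b ha hb hadj
  have hA := h.2 a b (by rw [mem_support_append_iff]; left; exact ha)
    (by rw [mem_support_append_iff]; left; exact hb) hadj
  rw [toSubgraph_adj_iff_mem_edges] at hA ⊢
  rw [edges_append, List.mem_append] at hA
  rcases hA with h1 | h2
  · exact h1
  · have ha' : a ∈ q.support := q.fst_mem_support_of_mem_edges h2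
    have hb' : b ∈ q.support := q.snd_mem_support_of_mem_edges h2
    have e1 := h.1.eq_junction ha ha'
    have e2 := h.1.eq_junction hb hb'
    subst e1; subst e2
    exact absurd hadj (G.irrefl)

lemma IsMonophonic.of_append_right {u v w : V} {p : G.Walk u v} {q : G.Walk v w}
    (h : (p.append q).IsMonophonic) : q.IsMonophonic := by
  refine ⟨h.1.of_append_right, ?_⟩
  intro a b ha hb hadj
  have hA := h.2 a b (by rw [mem_support_append_iff]; right; exact ha)
    (by rw [mem_support_append_iff]; right; exact hb) hadj
  rw [toSubgraph_adj_iff_mem_edges] at hA ⊢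
  rw [edges_append, List.mem_append] at hA
  rcases hA with h1 | h2
  · have ha' : a ∈ p.support := p.fst_mem_support_of_mem_edges h1
    have hb' : b ∈ p.support := p.snd_mem_support_of_mem_edges h1
    have e1 := h.1.eq_junction ha' ha
    have e2 := h.1.eq_junction hb' hb
    subst e1; subst e2
    exact absurd hadj (G.irrefl)
  · exact h2

lemma IsMonophonic.takeUntil [DecidableEq V] {u v x : V} {p : G.Walk u v} (hp : p.IsMonophonic)
    (h : x ∈ p.support) : (p.takeUntil x h).IsMonophonic := by
  rw [← take_spec p h] at hp
  exact hp.of_append_left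

lemma IsMonophonic.dropUntil [DecidableEq V] {u v x : V} {p : G.Walk u v} (hp : p.IsMonophonic)
    (h : x ∈ p.support) : (p.dropUntil x h).IsMonophonic := by
  rw [← take_spec p h] at hp
  exact hp.of_append_right

/-- An induced path between adjacent vertices consists of just those two vertices. -/
lemma IsMonophonic.support_eq_of_adj {u v : V} {p : G.Walk u v} (hp : p.IsMonophonic)
    (hadj : G.Adj u v) : ∀ x ∈ p.support, x = u ∨ x = v := by
  have hedge : s(u, v) ∈ p.edges := (toSubgraph_adj_iff_mem_edges p).mp
    (hp.2 u v p.start_mem_support p.end_mem_support hadj)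
  cases p with
  | nil => exact absurd hadj (G.irrefl)
  | @cons _ w _ h q =>
    have hpath := hp.1
    rw [cons_isPath_iff] at hpath
    simp only [edges_cons, List.mem_cons] at hedge
    rcases hedge with h1 | h2
    · have hwv : w = v := by
        rw [Sym2.congr_right] at h1
        exact h1.symm
      subst hwv
      have hq : ∀ x ∈ q.support, x = w := by
        intro x hx
        cases q with
        | nil => simpa using hx
        | cons h' q' =>
          exfalso
          have := hpath.1
          rw [cons_isPath_iff] at this
          exact this.2 q'.end_mem_support
      intro x hx
      rw [support_cons, List.mem_cons] at hx
      rcases hx with rfl | hx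
      · exact Or.inl rfl
      · exact Or.inr (hq x hx)
    · exfalso
      exact hpath.2 (q.fst_mem_support_of_mem_edges h2)

end Walk

open Walk

variable {V : Type*} {G : SimpleGraph V}

/-- In a connected graph, every pair of vertices is joined by an induced (monophonic) path. -/
lemma Connected.exists_mono_walk (hG : G.Connected) (u v : V) :
    ∃ p : G.Walk u v, p.IsMonophonic := by
  classical
  obtain ⟨p, hp, hlen⟩ := hG.exists_path_of_dist u v
  refine ⟨p, hp, ?_⟩
  intro a b ha hb hadj
  obtain ⟨s, t, hst, A, B, C, hdec⟩ : ∃ s t, ((s = a ∧ t = b) ∨ (s = b ∧ t = a)) ∧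
      ∃ (A : G.Walk u s) (B : G.Walk s t) (C : G.Walk t v), p = A.append (B.append C) := by
    by_cases hbd : b ∈ (p.dropUntil a ha).support
    · exact ⟨a, b, Or.inl ⟨rfl, rfl⟩, p.takeUntil a ha, (p.dropUntil a ha).takeUntil b hbd,
        (p.dropUntil a ha).dropUntil b hbd, by rw [take_spec, take_spec]⟩
    · have hbt : b ∈ (p.takeUntil a ha).support := by
        have hb' := hb
        rw [← p.take_spec ha, mem_support_append_iff] at hb'
        tauto
      refine ⟨b, a, Or.inr ⟨rfl, rfl⟩, (p.takeUntil a ha).takeUntil b hbt,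
        (p.takeUntil a ha).dropUntil b hbt, p.dropUntil a ha, ?_⟩
      rw [Walk.append_assoc, take_spec, take_spec]
  have hadj' : G.Adj s t := by
    rcases hst with ⟨rfl, rfl⟩ | ⟨rfl, rfl⟩
    · exact hadj
    · exact hadj.symm
  have hmin : G.dist u v ≤ (A.append (Walk.cons hadj' C)).length := dist_le _
  rw [Walk.length_append, Walk.length_cons] at hmin
  have hPlen : p.length = A.length + (B.length + C.length) := by
    rw [hdec, Walk.length_append, Walk.length_append]
  have hBne : B.length ≠ 0 := fun h0 => hadj'.ne (Walk.eq_of_length_eq_zero h0)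
  have hB1 : B.length = 1 := by omega
  have hedge : s(s, t) ∈ B.edges := by
    cases B with
    | nil => simp at hB1
    | cons h B' =>
      cases B' with
      | nil => simp
      | cons h' B'' => simp [Walk.length_cons] at hB1
  have hmem : s(s, t) ∈ p.edges := by
    rw [hdec, Walk.edges_append, Walk.edges_append]
    simp [hedge]
  have hadj2 : p.toSubgraph.Adj s t := (toSubgraph_adj_iff_mem_edges p).mpr hmem
  rcases hst with ⟨rfl, rfl⟩ | ⟨rfl, rfl⟩
  · exact hadj2
  · exact hadj2.symm


/-- From a monophonic walk starting at `x` containing `y` and `z`, extract a monophonic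
walk from `x` to one of them containing the other. -/
lemma exists_mono_through_of_start [DecidableEq V] {x v y z : V} {d : G.Walk x v}
    (hd : d.IsMonophonic) (hy : y ∈ d.support) (hz : z ∈ d.support) :
    (∃ q : G.Walk x y, q.IsMonophonic ∧ z ∈ q.support) ∨
    (∃ q : G.Walk x z, q.IsMonophonic ∧ y ∈ q.support) := by
  by_cases hzd : z ∈ (d.dropUntil y hy).support
  · right
    refine ⟨(d.takeUntil y hy).append ((d.dropUntil y hy).takeUntil z hzd), ?_, ?_⟩
    · have hdec : d = ((d.takeUntil y hy).append ((d.dropUntil y hy).takeUntil z hzd)).append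
          ((d.dropUntil y hy).dropUntil z hzd) := by
        rw [← Walk.append_assoc, take_spec, take_spec]
      rw [hdec] at hd
      exact hd.of_append_left
    · rw [mem_support_append_iff]
      left; exact Walk.end_mem_support _
  · left
    have hzt : z ∈ (d.takeUntil y hy).support := by
      have hz' := hz
      rw [← d.take_spec hy, mem_support_append_iff] at hz'
      tauto
    exact ⟨d.takeUntil y hy, hd.takeUntil hy, hzt⟩

/-- Given three distinct vertices on a monophonic walk, there is a monophonic walk
between two of them passing through the third. -/
lemma exists_mono_three_points [DecidableEq V] {u v x y z : V} {p : G.Walk u v}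
    (hp : p.IsMonophonic) (hx : x ∈ p.support) (hy : y ∈ p.support) (hz : z ∈ p.support)
    (hxy : x ≠ y) (hxz : x ≠ z) (hyz : y ≠ z) :
    ∃ (a b c : V) (q : G.Walk a c), q.IsMonophonic ∧ b ∈ q.support ∧
      a ∈ ({x, y, z} : Set V) ∧ b ∈ ({x, y, z} : Set V) ∧ c ∈ ({x, y, z} : Set V) ∧
      a ≠ b ∧ a ≠ c ∧ b ≠ c := by
  by_cases hyd : y ∈ (p.dropUntil x hx).support <;>
    by_cases hzd : z ∈ (p.dropUntil x hx).support
  · rcases exists_mono_through_of_start (hp.dropUntil hx) hyd hzd with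
      ⟨q, hq, hzq⟩ | ⟨q, hq, hyq⟩
    · exact ⟨x, z, y, q, hq, hzq, by simp, by simp, by simp, hxz, hxy, hyz.symm⟩
    · exact ⟨x, y, z, q, hq, hyq, by simp, by simp, by simp, hxy, hxz, hyz⟩
  · -- y after x, z before x : walk z → x → y
    have hzt : z ∈ (p.takeUntil x hx).support := by
      have h' := hz
      rw [← p.take_spec hx, mem_support_append_iff] at h'
      tauto
    refine ⟨z, x, y,
      (((p.takeUntil x hx).dropUntil z hzt).reverse.reverse).append
        ((p.dropUntil x hx).takeUntil y hyd), ?_, ?_, by simp, by simp, by simp,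
        hxz.symm, hyz.symm, hxy⟩
    · have hdec : p = ((p.takeUntil x hx).takeUntil z hzt).append
          (((((p.takeUntil x hx).dropUntil z hzt).reverse.reverse).append
            ((p.dropUntil x hx).takeUntil y hyd)).append
            ((p.dropUntil x hx).dropUntil y hyd)) := by
        rw [Walk.reverse_reverse, Walk.append_assoc, Walk.append_assoc, take_spec,
          ← Walk.append_assoc, take_spec, take_spec]
      rw [hdec] at hp
      exact hp.of_append_right.of_append_left
    · rw [mem_support_append_iff]
      left
      rw [Walk.reverse_reverse]
      exact Walk.end_mem_support _
  · -- z after x, y before x : walk y → x → z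
    have hyt : y ∈ (p.takeUntil x hx).support := by
      have h' := hy
      rw [← p.take_spec hx, mem_support_append_iff] at h'
      tauto
    refine ⟨y, x, z,
      (((p.takeUntil x hx).dropUntil y hyt).reverse.reverse).append
        ((p.dropUntil x hx).takeUntil z hzd), ?_, ?_, by simp, by simp, by simp,
        hxy.symm, hyz, hxz⟩
    · have hdec : p = ((p.takeUntil x hx).takeUntil y hyt).append
          (((((p.takeUntil x hx).dropUntil y hyt).reverse.reverse).append
            ((p.dropUntil x hx).takeUntil z hzd)).append
            ((p.dropUntil x hx).dropUntil z hzd)) := by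
        rw [Walk.reverse_reverse, Walk.append_assoc, Walk.append_assoc, take_spec,
          ← Walk.append_assoc, take_spec, take_spec]
      rw [hdec] at hp
      exact hp.of_append_right.of_append_left
    · rw [mem_support_append_iff]
      left
      rw [Walk.reverse_reverse]
      exact Walk.end_mem_support _
  · -- both before x : use the reversed prefix
    have hyt : y ∈ (p.takeUntil x hx).reverse.support := by
      rw [Walk.support_reverse, List.mem_reverse]
      have h' := hy
      rw [← p.take_spec hx, mem_support_append_iff] at h'
      tauto
    have hzt : z ∈ (p.takeUntil x hx).reverse.support := by
      rw [Walk.support_reverse, List.mem_reverse]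
      have h' := hz
      rw [← p.take_spec hx, mem_support_append_iff] at h'
      tauto
    rcases exists_mono_through_of_start ((hp.takeUntil hx).reverse) hyt hzt with
      ⟨q, hq, hzq⟩ | ⟨q, hq, hyq⟩
    · exact ⟨x, z, y, q, hq, hzq, by simp, by simp, by simp, hxz, hxy, hyz.symm⟩
    · exact ⟨x, y, z, q, hq, hyq, by simp, by simp, by simp, hxy, hxz, hyz⟩

/-- Monophonic walks are preserved by graph embeddings. -/
lemma Walk.IsMonophonic.map_embedding {V' : Type*} {G' : SimpleGraph V'} (f : G ↪g G')
    {u v : V} {p : G.Walk u v} (hp : p.IsMonophonic) :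
    (p.map f.toHom).IsMonophonic := by
  refine ⟨Walk.map_isPath_of_injective f.injective hp.1, ?_⟩
  intro a b ha hb hadj
  rw [Walk.support_map, List.mem_map] at ha hb
  obtain ⟨a', ha', rfl⟩ := ha
  obtain ⟨b', hb', rfl⟩ := hb
  have hadj' : G.Adj a' b' := f.map_adj_iff.mp hadj
  have h2 := hp.2 a' b' ha' hb' hadj'
  rw [Walk.toSubgraph_map]
  exact ⟨a', b', h2, rfl, rfl⟩


section Product

variable {α β : Type*} {G : SimpleGraph α} {H : SimpleGraph β}

/-- An L-shaped induced path in a box product: a column followed by a row. -/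
lemma mono_L {g1 g3 : α} {h1 h2 : β} {R : H.Walk h1 h2} {Q : G.Walk g1 g3}
    (hR : R.IsMonophonic) (hQ : Q.IsMonophonic) :
    ∃ W : (G □ H).Walk (g1, h1) (g3, h2), W.IsMonophonic ∧
      ∀ x : α × β, x ∈ W.support ↔
        ((∃ y ∈ R.support, x = (g1, y)) ∨ (∃ g ∈ Q.support, x = (g, h2))) := by
  classical
  let C : (G □ H).Walk (g1, h1) (g1, h2) := R.map (SimpleGraph.boxProdRight G H g1).toHom
  let W2 : (G □ H).Walk (g1, h2) (g3, h2) := Q.map (SimpleGraph.boxProdLeft G H h2).toHom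
  have hCm : C.IsMonophonic := hR.map_embedding (SimpleGraph.boxProdRight G H g1)
  have hW2m : W2.IsMonophonic := hQ.map_embedding (SimpleGraph.boxProdLeft G H h2)
  have hCs : ∀ x : α × β, x ∈ C.support ↔ ∃ y ∈ R.support, x = (g1, y) := by
    intro x
    rw [show C.support = R.support.map (fun y => (g1, y)) from Walk.support_map _ _, List.mem_map]
    constructor
    · rintro ⟨y, hy, rfl⟩; exact ⟨y, hy, rfl⟩
    · rintro ⟨y, hy, rfl⟩; exact ⟨y, hy, rfl⟩
  have hW2s : ∀ x : α × β, x ∈ W2.support ↔ ∃ g ∈ Q.support, x = (g, h2) := by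
    intro x
    rw [show W2.support = Q.support.map (fun g => (g, h2)) from Walk.support_map _ _, List.mem_map]
    constructor
    · rintro ⟨g, hg, rfl⟩; exact ⟨g, hg, rfl⟩
    · rintro ⟨g, hg, rfl⟩; exact ⟨g, hg, rfl⟩
  refine ⟨C.append W2, ⟨?_, ?_⟩, ?_⟩
  · refine Walk.isPath_append_of hCm.1 hW2m.1 ?_
    intro x hxC hxW
    obtain ⟨y, hy, rfl⟩ := (hCs x).mp hxC
    obtain ⟨g, hg, hgeq⟩ := (hW2s _).mp hxW
    have : g1 = g := congrArg Prod.fst hgeq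
    have : y = h2 := congrArg Prod.snd hgeq
    subst this
    rfl
  · intro a b ha hb hadj
    rw [Walk.mem_support_append_iff] at ha hb
    rw [Walk.toSubgraph_append, Subgraph.sup_adj]
    rcases ha with haC | haW <;> rcases hb with hbC | hbW
    · exact Or.inl (hCm.2 a b haC hbC hadj)
    · -- a in column, b in row
      obtain ⟨y, hy, rfl⟩ := (hCs a).mp haC
      obtain ⟨g, hg, rfl⟩ := (hW2s b).mp hbW
      have hadjK := hadj
      rcases hadjK with ⟨hadjG, he⟩ | ⟨hadjH, he⟩
      · have he' : y = h2 := he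
        subst he'
        refine Or.inr (hW2m.2 _ _ ?_ hbW hadj)
        exact (hW2s _).mpr ⟨g1, Q.start_mem_support, rfl⟩
      · have he' : g = g1 := he.symm
        subst he'
        refine Or.inl (hCm.2 _ _ haC ?_ hadj)
        exact (hCs _).mpr ⟨h2, R.end_mem_support, rfl⟩
    · -- a in row, b in column
      obtain ⟨g, hg, rfl⟩ := (hW2s a).mp haW
      obtain ⟨y, hy, rfl⟩ := (hCs b).mp hbC
      have hadjK := hadj
      rcases hadjK with ⟨hadjG, he⟩ | ⟨hadjH, he⟩
      · have he' : h2 = y := he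
        subst he'
        refine Or.inr (hW2m.2 _ _ haW ?_ hadj)
        exact (hW2s _).mpr ⟨g1, Q.start_mem_support, rfl⟩
      · have he' : g = g1 := he
        subst he'
        refine Or.inl (hCm.2 _ _ ?_ hbC hadj)
        exact (hCs _).mpr ⟨h2, R.end_mem_support, rfl⟩
    · exact Or.inr (hW2m.2 a b haW hbW hadj)
  · intro x
    rw [Walk.mem_support_append_iff, hCs, hW2s]

/-- A Z-shaped induced path in a box product: row at `h1`, full column at `g2`, row at `h3`.
Requires the two row levels to be distinct and non-adjacent. -/
lemma mono_Z {g1 g2 g3 : α} {h1 h3 : β} {Q1 : G.Walk g1 g2} {R : H.Walk h1 h3}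
    {Q2 : G.Walk g2 g3} (hQ1 : Q1.IsMonophonic) (hR : R.IsMonophonic)
    (hQ2 : Q2.IsMonophonic) (hne : h1 ≠ h3) (hnadj : ¬ H.Adj h1 h3) :
    ∃ W : (G □ H).Walk (g1, h1) (g3, h3), W.IsMonophonic ∧
      ∀ x : α × β, x ∈ W.support ↔
        ((∃ g ∈ Q1.support, x = (g, h1)) ∨ (∃ y ∈ R.support, x = (g2, y)) ∨
          (∃ g ∈ Q2.support, x = (g, h3))) := by
  classical
  let W1 : (G □ H).Walk (g1, h1) (g2, h1) := Q1.map (SimpleGraph.boxProdLeft G H h1).toHom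
  let C : (G □ H).Walk (g2, h1) (g2, h3) := R.map (SimpleGraph.boxProdRight G H g2).toHom
  let W3 : (G □ H).Walk (g2, h3) (g3, h3) := Q2.map (SimpleGraph.boxProdLeft G H h3).toHom
  have hW1m : W1.IsMonophonic := hQ1.map_embedding (SimpleGraph.boxProdLeft G H h1)
  have hCm : C.IsMonophonic := hR.map_embedding (SimpleGraph.boxProdRight G H g2)
  have hW3m : W3.IsMonophonic := hQ2.map_embedding (SimpleGraph.boxProdLeft G H h3)
  have hW1s : ∀ x : α × β, x ∈ W1.support ↔ ∃ g ∈ Q1.support, x = (g, h1) := by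
    intro x
    rw [show W1.support = Q1.support.map (fun g => (g, h1)) from Walk.support_map _ _,
      List.mem_map]
    constructor
    · rintro ⟨g, hg, rfl⟩; exact ⟨g, hg, rfl⟩
    · rintro ⟨g, hg, rfl⟩; exact ⟨g, hg, rfl⟩
  have hCs : ∀ x : α × β, x ∈ C.support ↔ ∃ y ∈ R.support, x = (g2, y) := by
    intro x
    rw [show C.support = R.support.map (fun y => (g2, y)) from Walk.support_map _ _, List.mem_map]
    constructor
    · rintro ⟨y, hy, rfl⟩; exact ⟨y, hy, rfl⟩
    · rintro ⟨y, hy, rfl⟩; exact ⟨y, hy, rfl⟩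
  have hW3s : ∀ x : α × β, x ∈ W3.support ↔ ∃ g ∈ Q2.support, x = (g, h3) := by
    intro x
    rw [show W3.support = Q2.support.map (fun g => (g, h3)) from Walk.support_map _ _,
      List.mem_map]
    constructor
    · rintro ⟨g, hg, rfl⟩; exact ⟨g, hg, rfl⟩
    · rintro ⟨g, hg, rfl⟩; exact ⟨g, hg, rfl⟩
  have hCW3 : (C.append W3).IsPath := by
    refine Walk.isPath_append_of hCm.1 hW3m.1 ?_
    intro x hxC hxW
    obtain ⟨y, hy, rfl⟩ := (hCs x).mp hxC
    obtain ⟨g, hg, hgeq⟩ := (hW3s _).mp hxW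
    have h1' : g2 = g := congrArg Prod.fst hgeq
    have h2' : y = h3 := congrArg Prod.snd hgeq
    subst h2'
    rfl
  refine ⟨W1.append (C.append W3), ⟨?_, ?_⟩, ?_⟩
  · refine Walk.isPath_append_of hW1m.1 hCW3 ?_
    intro x hxW1 hx2
    obtain ⟨g, hg, rfl⟩ := (hW1s x).mp hxW1
    rw [Walk.mem_support_append_iff] at hx2
    rcases hx2 with hxC | hxW3
    · obtain ⟨y, hy, hyeq⟩ := (hCs _).mp hxC
      have e1 : g = g2 := congrArg Prod.fst hyeq
      subst e1
      rfl
    · obtain ⟨g', hg', hgeq⟩ := (hW3s _).mp hxW3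
      have e2 : h1 = h3 := congrArg Prod.snd hgeq
      exact absurd e2 hne
  · intro a b ha hb hadj
    rw [Walk.mem_support_append_iff] at ha hb
    rw [Walk.mem_support_append_iff] at ha hb
    rw [Walk.toSubgraph_append, Walk.toSubgraph_append, Subgraph.sup_adj, Subgraph.sup_adj]
    have hornt : ∀ (a b : α × β), a ∈ W1.support → b ∈ C.support → (G □ H).Adj a b →
        W1.toSubgraph.Adj a b ∨ C.toSubgraph.Adj a b := by
      intro a b haW1 hbC hadj
      obtain ⟨g, hg, rfl⟩ := (hW1s a).mp haW1
      obtain ⟨y, hy, rfl⟩ := (hCs b).mp hbC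
      have hadjK := hadj
      rcases hadjK with ⟨hadjG, he⟩ | ⟨hadjH, he⟩
      · have he' : h1 = y := he
        subst he'
        refine Or.inl (hW1m.2 _ _ haW1 ?_ hadj)
        exact (hW1s _).mpr ⟨g2, Q1.end_mem_support, rfl⟩
      · have he' : g = g2 := he
        subst he'
        refine Or.inr (hCm.2 _ _ ?_ hbC hadj)
        exact (hCs _).mpr ⟨h1, R.start_mem_support, rfl⟩
    have hornt2 : ∀ (a b : α × β), a ∈ C.support → b ∈ W3.support → (G □ H).Adj a b →
        C.toSubgraph.Adj a b ∨ W3.toSubgraph.Adj a b := by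
      intro a b haC hbW3 hadj
      obtain ⟨y, hy, rfl⟩ := (hCs a).mp haC
      obtain ⟨g, hg, rfl⟩ := (hW3s b).mp hbW3
      have hadjK := hadj
      rcases hadjK with ⟨hadjG, he⟩ | ⟨hadjH, he⟩
      · have he' : y = h3 := he
        subst he'
        refine Or.inr (hW3m.2 _ _ ?_ hbW3 hadj)
        exact (hW3s _).mpr ⟨g2, Q2.start_mem_support, rfl⟩
      · have he' : g2 = g := he
        subst he'
        refine Or.inl (hCm.2 _ _ haC ?_ hadj)
        exact (hCs _).mpr ⟨h3, R.end_mem_support, rfl⟩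
    have hW1W3 : ∀ (a b : α × β), a ∈ W1.support → b ∈ W3.support → (G □ H).Adj a b → False := by
      intro a b haW1 hbW3 hadj
      obtain ⟨g, hg, rfl⟩ := (hW1s a).mp haW1
      obtain ⟨g', hg', rfl⟩ := (hW3s b).mp hbW3
      have hadjK := hadj
      rcases hadjK with ⟨hadjG, he⟩ | ⟨hadjH, he⟩
      · exact hne he
      · exact hnadj hadjH
    rcases ha with haW1 | haC | haW3 <;> rcases hb with hbW1 | hbC | hbW3
    · exact Or.inl (hW1m.2 a b haW1 hbW1 hadj)
    · rcases hornt a b haW1 hbC hadj with h' | h'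
      · exact Or.inl h'
      · exact Or.inr (Or.inl h')
    · exact absurd hadj (fun h => hW1W3 a b haW1 hbW3 h)
    · rcases hornt b a hbW1 haC hadj.symm with h' | h'
      · exact Or.inl h'.symm
      · exact Or.inr (Or.inl h'.symm)
    · exact Or.inr (Or.inl (hCm.2 a b haC hbC hadj))
    · rcases hornt2 a b haC hbW3 hadj with h' | h'
      · exact Or.inr (Or.inl h')
      · exact Or.inr (Or.inr h')
    · exact absurd hadj.symm (fun h => hW1W3 b a hbW1 haW3 h)
    · rcases hornt2 b a hbC haW3 hadj.symm with h' | h'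
      · exact Or.inr (Or.inl h'.symm)
      · exact Or.inr (Or.inr h'.symm)
    · exact Or.inr (Or.inr (hW3m.2 a b haW3 hbW3 hadj))
  · intro x
    rw [Walk.mem_support_append_iff, Walk.mem_support_append_iff, hW1s, hCs, hW3s]

end Product


section Product2

variable {α β : Type*} {G : SimpleGraph α} {H : SimpleGraph β}

/-- The transposed Z-shape: column at `g1`, full row at `h2`, column at `g3`. -/
lemma mono_CRC {g1 g3 : α} {h1 h2 h4 : β} {R1 : H.Walk h1 h2} {Q : G.Walk g1 g3}
    {R2 : H.Walk h2 h4} (hR1 : R1.IsMonophonic) (hQ : Q.IsMonophonic) (hR2 : R2.IsMonophonic)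
    (hne : g1 ≠ g3) (hnadj : ¬ G.Adj g1 g3) :
    ∃ W : (G □ H).Walk (g1, h1) (g3, h4), W.IsMonophonic ∧
      ∀ x : α × β, x ∈ W.support ↔
        ((∃ y ∈ R1.support, x = (g1, y)) ∨ (∃ g ∈ Q.support, x = (g, h2)) ∨
          (∃ y ∈ R2.support, x = (g3, y))) := by
  obtain ⟨W', hW', hWs'⟩ := mono_Z (G := H) (H := G) hR1 hQ hR2 hne hnadj
  refine ⟨W'.map (boxProdComm H G).toHom, hW'.map_embedding (boxProdComm H G).toEmbedding, ?_⟩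
  intro x
  erw [Walk.support_map, List.mem_map]
  constructor
  · rintro ⟨y, hy, rfl⟩
    rcases (hWs' y).mp hy with ⟨t, ht, rfl⟩ | ⟨t, ht, rfl⟩ | ⟨t, ht, rfl⟩
    · exact Or.inl ⟨t, ht, rfl⟩
    · exact Or.inr (Or.inl ⟨t, ht, rfl⟩)
    · exact Or.inr (Or.inr ⟨t, ht, rfl⟩)
  · rintro (⟨t, ht, rfl⟩ | ⟨t, ht, rfl⟩ | ⟨t, ht, rfl⟩)
    · exact ⟨(t, g1), (hWs' _).mpr (Or.inl ⟨t, ht, rfl⟩), rfl⟩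
    · exact ⟨(h2, t), (hWs' _).mpr (Or.inr (Or.inl ⟨t, ht, rfl⟩)), rfl⟩
    · exact ⟨(t, g3), (hWs' _).mpr (Or.inr (Or.inr ⟨t, ht, rfl⟩)), rfl⟩

end Product2

section SmallPaths

variable {V : Type*} {G : SimpleGraph V}

lemma mono_path2 {x y z : V} (hxy : G.Adj x y) (hyz : G.Adj y z)
    (hxz : ¬ G.Adj x z) (hnexz : x ≠ z) :
    ((Walk.cons hxy (Walk.cons hyz Walk.nil)) : G.Walk x z).IsMonophonic := by
  constructor
  · simp [Walk.isPath_def, hxy.ne, hyz.ne, hnexz]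
  · intro a b ha hb hadj
    simp only [Walk.support_cons, Walk.support_nil, List.mem_cons,
      List.not_mem_nil, or_false] at ha hb
    rw [Walk.toSubgraph_adj_iff_mem_edges]
    simp only [Walk.edges_cons, Walk.edges_nil, List.mem_cons, List.not_mem_nil, or_false]
    rcases ha with rfl | rfl | rfl <;> rcases hb with rfl | rfl | rfl
    · exact absurd hadj G.irrefl
    · left; rfl
    · exact absurd hadj hxz
    · left; exact Sym2.eq_swap
    · exact absurd hadj G.irrefl
    · right; rfl
    · exact absurd hadj (fun h => hxz h.symm)
    · right; exact Sym2.eq_swap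
    · exact absurd hadj G.irrefl

lemma mono_path3 {x y z w : V} (h1 : G.Adj x y) (h2 : G.Adj y z)
    (h3 : G.Adj z w) (nxz : ¬ G.Adj x z) (nxw : ¬ G.Adj x w) (nyw : ¬ G.Adj y w)
    (exw : x ≠ w) (eyw : y ≠ w) (exz : x ≠ z) :
    ((Walk.cons h1 (Walk.cons h2 (Walk.cons h3 Walk.nil))) : G.Walk x w).IsMonophonic := by
  constructor
  · simp [Walk.isPath_def, h1.ne, h2.ne, h3.ne, exw, eyw, exz]
  · intro a b ha hb hadj
    simp only [Walk.support_cons, Walk.support_nil, List.mem_cons,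
      List.not_mem_nil, or_false] at ha hb
    rw [Walk.toSubgraph_adj_iff_mem_edges]
    simp only [Walk.edges_cons, Walk.edges_nil, List.mem_cons, List.not_mem_nil, or_false]
    rcases ha with rfl | rfl | rfl | rfl <;> rcases hb with rfl | rfl | rfl | rfl
    · exact absurd hadj G.irrefl
    · left; rfl
    · exact absurd hadj nxz
    · exact absurd hadj nxw
    · left; exact Sym2.eq_swap
    · exact absurd hadj G.irrefl
    · right; left; rfl
    · exact absurd hadj nyw
    · exact absurd hadj (fun h => nxz h.symm)
    · right; left; exact Sym2.eq_swap
    · exact absurd hadj G.irrefl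
    · right; right; rfl
    · exact absurd hadj (fun h => nxw h.symm)
    · exact absurd hadj (fun h => nyw h.symm)
    · right; right; exact Sym2.eq_swap
    · exact absurd hadj G.irrefl

end SmallPaths


section Main

variable {α β : Type*} [Fintype α] [Fintype β] {G : SimpleGraph α} {H : SimpleGraph β}

lemma mp_contra {M : Set (α × β)} (hM : (G □ H).IsMPSet M) {u v : α × β}
    {W : (G □ H).Walk u v} (hW : W.IsMonophonic) {n1 n2 n3 : α × β}
    (h1 : n1 ∈ M) (h2 : n2 ∈ M) (h3 : n3 ∈ M)
    (s1 : n1 ∈ W.support) (s2 : n2 ∈ W.support) (s3 : n3 ∈ W.support)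
    (d12 : n1 ≠ n2) (d13 : n1 ≠ n3) (d23 : n2 ≠ n3) : False := by
  have hle := hM W hW
  have hsub : ({n1, n2, n3} : Set (α × β)) ⊆ {x ∈ M | x ∈ W.support} := by
    intro x hx
    simp only [Set.mem_insert_iff, Set.mem_singleton_iff] at hx
    rcases hx with rfl | rfl | rfl
    · exact ⟨h1, s1⟩
    · exact ⟨h2, s2⟩
    · exact ⟨h3, s3⟩
  have h3' : ({n1, n2, n3} : Set (α × β)).ncard = 3 :=
    Set.ncard_eq_three.mpr ⟨n1, n2, n3, d12, d13, d23, rfl⟩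
  have := Set.ncard_le_ncard hsub (Set.toFinite _)
  omega

lemma config1 (hG : G.Connected) (hH : H.Connected) {M : Set (α × β)}
    (hM : (G □ H).IsMPSet M) {a c : α} {b f : β}
    (hab : (a, b) ∈ M) (haf : (a, f) ∈ M) (hcb : (c, b) ∈ M)
    (hbf : b ≠ f) (hac : a ≠ c) : False := by
  obtain ⟨R, hR⟩ := hH.exists_mono_walk f b
  obtain ⟨Q, hQ⟩ := hG.exists_mono_walk a c
  obtain ⟨W, hWm, hWs⟩ := mono_L hR hQ
  exact mp_contra hM hWm haf hab hcb
    ((hWs _).mpr (Or.inl ⟨f, R.start_mem_support, rfl⟩))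
    ((hWs _).mpr (Or.inl ⟨b, R.end_mem_support, rfl⟩))
    ((hWs _).mpr (Or.inr ⟨c, Q.end_mem_support, rfl⟩))
    (fun h => hbf (congrArg Prod.snd h).symm)
    (fun h => hac (congrArg Prod.fst h))
    (fun h => hac (congrArg Prod.fst h))

lemma config2 (hG : G.Connected) (hH : H.Connected) {M : Set (α × β)}
    (hM : (G □ H).IsMPSet M) {a c e : α} {b f g : β}
    (hab : (a, b) ∈ M) (haf : (a, f) ∈ M) (hcg : (c, g) ∈ M) (heg : (e, g) ∈ M)
    (hbf : b ≠ f) (hce : c ≠ e) : False := by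
  by_cases hac : a = c
  · subst hac
    by_cases hgb : g = b
    · subst hgb
      exact config1 hG hH hM hab haf heg hbf hce
    · exact config1 hG hH hM hcg hab heg hgb hce
  by_cases hae : a = e
  · subst hae
    by_cases hgb : g = b
    · subst hgb
      exact config1 hG hH hM hab haf hcg hbf (fun h => hce h.symm)
    · exact config1 hG hH hM heg hab hcg hgb (fun h => hce h.symm)
  by_cases hgb : g = b
  · subst hgb
    exact config1 hG hH hM hab haf hcg hbf hac
  by_cases hgf : g = f
  · subst hgf
    exact config1 hG hH hM haf hab hcg (fun h => hbf h.symm) hac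
  -- main case: a ∉ {c, e}, g ∉ {b, f}
  by_cases h1 : H.Adj g b
  case neg =>
    obtain ⟨Q1, hQ1⟩ := hG.exists_mono_walk c e
    obtain ⟨R, hR⟩ := hH.exists_mono_walk g b
    obtain ⟨Q2, hQ2⟩ := hG.exists_mono_walk e a
    obtain ⟨W, hWm, hWs⟩ := mono_Z hQ1 hR hQ2 hgb h1
    exact mp_contra hM hWm hcg heg hab
      ((hWs _).mpr (Or.inl ⟨c, Q1.start_mem_support, rfl⟩))
      ((hWs _).mpr (Or.inl ⟨e, Q1.end_mem_support, rfl⟩))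
      ((hWs _).mpr (Or.inr (Or.inr ⟨a, Q2.end_mem_support, rfl⟩)))
      (fun h => hce (congrArg Prod.fst h))
      (fun h => hgb (congrArg Prod.snd h))
      (fun h => hgb (congrArg Prod.snd h))
  case pos =>
  by_cases h2 : H.Adj g f
  case neg =>
    obtain ⟨Q1, hQ1⟩ := hG.exists_mono_walk c e
    obtain ⟨R, hR⟩ := hH.exists_mono_walk g f
    obtain ⟨Q2, hQ2⟩ := hG.exists_mono_walk e a
    obtain ⟨W, hWm, hWs⟩ := mono_Z hQ1 hR hQ2 hgf h2
    exact mp_contra hM hWm hcg heg haf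
      ((hWs _).mpr (Or.inl ⟨c, Q1.start_mem_support, rfl⟩))
      ((hWs _).mpr (Or.inl ⟨e, Q1.end_mem_support, rfl⟩))
      ((hWs _).mpr (Or.inr (Or.inr ⟨a, Q2.end_mem_support, rfl⟩)))
      (fun h => hce (congrArg Prod.fst h))
      (fun h => hgf (congrArg Prod.snd h))
      (fun h => hgf (congrArg Prod.snd h))
  case pos =>
  by_cases h3 : G.Adj a c
  case neg =>
    obtain ⟨R1, hR1⟩ := hH.exists_mono_walk f b
    obtain ⟨Q, hQ⟩ := hG.exists_mono_walk a c
    obtain ⟨R2, hR2⟩ := hH.exists_mono_walk b g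
    obtain ⟨W, hWm, hWs⟩ := mono_CRC hR1 hQ hR2 hac h3
    exact mp_contra hM hWm haf hab hcg
      ((hWs _).mpr (Or.inl ⟨f, R1.start_mem_support, rfl⟩))
      ((hWs _).mpr (Or.inl ⟨b, R1.end_mem_support, rfl⟩))
      ((hWs _).mpr (Or.inr (Or.inr ⟨g, R2.end_mem_support, rfl⟩)))
      (fun h => hbf (congrArg Prod.snd h).symm)
      (fun h => hac (congrArg Prod.fst h))
      (fun h => hac (congrArg Prod.fst h))
  case pos =>
  by_cases h4 : G.Adj a e
  case neg =>
    obtain ⟨R1, hR1⟩ := hH.exists_mono_walk f b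
    obtain ⟨Q, hQ⟩ := hG.exists_mono_walk a e
    obtain ⟨R2, hR2⟩ := hH.exists_mono_walk b g
    obtain ⟨W, hWm, hWs⟩ := mono_CRC hR1 hQ hR2 hae h4
    exact mp_contra hM hWm haf hab heg
      ((hWs _).mpr (Or.inl ⟨f, R1.start_mem_support, rfl⟩))
      ((hWs _).mpr (Or.inl ⟨b, R1.end_mem_support, rfl⟩))
      ((hWs _).mpr (Or.inr (Or.inr ⟨g, R2.end_mem_support, rfl⟩)))
      (fun h => hbf (congrArg Prod.snd h).symm)
      (fun h => hae (congrArg Prod.fst h))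
      (fun h => hae (congrArg Prod.fst h))
  case pos =>
  by_cases h5 : G.Adj c e
  case neg =>
    obtain ⟨R1, hR1⟩ := hH.exists_mono_walk g b
    obtain ⟨R2, hR2⟩ := hH.exists_mono_walk b g
    have hQ : ((Walk.cons h3.symm (Walk.cons h4 Walk.nil)) : G.Walk c e).IsMonophonic :=
      mono_path2 h3.symm h4 h5 hce
    obtain ⟨W, hWm, hWs⟩ := mono_CRC hR1 hQ hR2 hce h5
    refine mp_contra hM hWm hcg hab heg
      ((hWs _).mpr (Or.inl ⟨g, R1.start_mem_support, rfl⟩))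
      ((hWs _).mpr (Or.inr (Or.inl ⟨a, ?_, rfl⟩)))
      ((hWs _).mpr (Or.inr (Or.inr ⟨g, R2.end_mem_support, rfl⟩)))
      (fun h => hac (congrArg Prod.fst h).symm)
      (fun h => hce (congrArg Prod.fst h))
      (fun h => hae (congrArg Prod.fst h))
    simp [Walk.support_cons]
  case pos =>
  by_cases h6 : H.Adj b f
  case neg =>
    obtain ⟨Q1, hQ1⟩ := hG.exists_mono_walk a c
    obtain ⟨Q2, hQ2⟩ := hG.exists_mono_walk c a
    have hR : ((Walk.cons h1.symm (Walk.cons h2 Walk.nil)) : H.Walk b f).IsMonophonic :=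
      mono_path2 h1.symm h2 h6 hbf
    obtain ⟨W, hWm, hWs⟩ := mono_Z hQ1 hR hQ2 hbf h6
    refine mp_contra hM hWm hab hcg haf
      ((hWs _).mpr (Or.inl ⟨a, Q1.start_mem_support, rfl⟩))
      ((hWs _).mpr (Or.inr (Or.inl ⟨g, ?_, rfl⟩)))
      ((hWs _).mpr (Or.inr (Or.inr ⟨a, Q2.end_mem_support, rfl⟩)))
      (fun h => hac (congrArg Prod.fst h))
      (fun h => hbf (congrArg Prod.snd h))
      (fun h => hac (congrArg Prod.fst h).symm)
    simp [Walk.support_cons]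
  case pos =>
    -- everything adjacent: explicit 4-vertex path (e,g) (e,b) (a,b) (a,f)
    have he1 : (G □ H).Adj (e, g) (e, b) := Or.inr ⟨h1, rfl⟩
    have he2 : (G □ H).Adj (e, b) (a, b) := Or.inl ⟨h4.symm, rfl⟩
    have he3 : (G □ H).Adj (a, b) (a, f) := Or.inr ⟨h6, rfl⟩
    have hn1 : ¬ (G □ H).Adj (e, g) (a, b) := by
      rintro (⟨_, hco⟩ | ⟨_, hco⟩)
      · exact hgb hco
      · exact hae (hco.symm)
    have hn2 : ¬ (G □ H).Adj (e, g) (a, f) := by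
      rintro (⟨_, hco⟩ | ⟨_, hco⟩)
      · exact hgf hco
      · exact hae (hco.symm)
    have hn3 : ¬ (G □ H).Adj (e, b) (a, f) := by
      rintro (⟨_, hco⟩ | ⟨_, hco⟩)
      · exact hbf hco
      · exact hae (hco.symm)
    have hWm := mono_path3 he1 he2 he3 hn1 hn2 hn3
      (fun h => hae (show a = e from (congrArg Prod.fst h).symm))
      (fun h => hae (show a = e from (congrArg Prod.fst h).symm))
      (fun h => hgb (show g = b from congrArg Prod.snd h))
    refine mp_contra hM hWm heg hab haf ?_ ?_ ?_
      (fun h => hgb (congrArg Prod.snd h))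
      (fun h => hae (congrArg Prod.fst h).symm)
      (fun h => hbf (congrArg Prod.snd h))
    · simp [Walk.support_cons]
    · simp [Walk.support_cons]
    · simp [Walk.support_cons]

end Main


section Key

variable {α β : Type*} [Fintype α] [Fintype β] {G : SimpleGraph α} {H : SimpleGraph β}

lemma key_lemma (hG : G.Connected) {M : Set (α × β)} (hM : (G □ H).IsMPSet M)
    (hinj : ∀ m ∈ M, ∀ m' ∈ M, m.2 = m'.2 → m = m') : M.ncard ≤ H.mpNum := by
  classical
  have hmp : H.IsMPSet (Prod.snd '' M) := by
    intro u v R0 hR0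
    by_contra hgt
    push_neg at hgt
    obtain ⟨T, hTsub, hT3⟩ := Set.exists_subset_card_eq (show 3 ≤ _ by omega : 3 ≤ ({x ∈ Prod.snd '' M | x ∈ R0.support}).ncard)
    obtain ⟨x, y, z, dxy, dxz, dyz, rfl⟩ := Set.ncard_eq_three.mp hT3
    have hx := hTsub (show x ∈ ({x, y, z} : Set β) by simp)
    have hy := hTsub (show y ∈ ({x, y, z} : Set β) by simp)
    have hz := hTsub (show z ∈ ({x, y, z} : Set β) by simp)
    obtain ⟨a, b, c, q, hq, hbq, haset, hbset, hcset, dab, dac, dbc⟩ :=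
      exists_mono_three_points hR0 hx.2 hy.2 hz.2 dxy dxz dyz
    have pick : ∀ t ∈ ({x, y, z} : Set β), ∃ m ∈ M, m.2 = t := by
      intro t ht
      simp only [Set.mem_insert_iff, Set.mem_singleton_iff] at ht
      rcases ht with rfl | rfl | rfl
      · obtain ⟨m, hm, hm2⟩ := hx.1; exact ⟨m, hm, hm2⟩
      · obtain ⟨m, hm, hm2⟩ := hy.1; exact ⟨m, hm, hm2⟩
      · obtain ⟨m, hm, hm2⟩ := hz.1; exact ⟨m, hm, hm2⟩
    obtain ⟨na, hna, hna2⟩ := pick a haset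
    obtain ⟨nb, hnb, hnb2⟩ := pick b hbset
    obtain ⟨nc, hnc, hnc2⟩ := pick c hcset
    have hnadj : ¬ H.Adj a c := by
      intro hadj
      rcases hq.support_eq_of_adj hadj b hbq with h' | h'
      · exact dab h'.symm
      · exact dbc h'
    obtain ⟨Q1, hQ1⟩ := hG.exists_mono_walk na.1 nb.1
    obtain ⟨Q2, hQ2⟩ := hG.exists_mono_walk nb.1 nc.1
    obtain ⟨W, hWm, hWs⟩ := mono_Z hQ1 hq hQ2 dac hnadj
    exact mp_contra hM hWm hna hnb hnc
      ((hWs _).mpr (Or.inl ⟨na.1, Q1.start_mem_support, Prod.ext rfl hna2⟩))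
      ((hWs _).mpr (Or.inr (Or.inl ⟨b, hbq, Prod.ext rfl hnb2⟩)))
      ((hWs _).mpr (Or.inr (Or.inr ⟨nc.1, Q2.end_mem_support, Prod.ext rfl hnc2⟩)))
      (fun h => dab (by rw [← hna2, ← hnb2, h]))
      (fun h => dac (by rw [← hna2, ← hnc2, h]))
      (fun h => dbc (by rw [← hnb2, ← hnc2, h]))
  have himg : (Prod.snd '' M).ncard = M.ncard :=
    Set.ncard_image_of_injOn (fun m hm m' hm' h => hinj m hm m' hm' h)
  rw [← himg]
  apply le_csSup
  · refine ⟨Fintype.card β, ?_⟩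
    rintro n ⟨S, _, rfl⟩
    calc S.ncard ≤ (Set.univ : Set β).ncard :=
          Set.ncard_le_ncard (Set.subset_univ _) Set.finite_univ
      _ = Fintype.card β := by rw [Set.ncard_univ, Nat.card_eq_fintype_card]
  · exact ⟨Prod.snd '' M, hmp, rfl⟩

lemma isMPSet_map {V V' : Type*} {A : SimpleGraph V} {B : SimpleGraph V'} (f : A ≃g B)
    {S : Set V} (hS : A.IsMPSet S) : B.IsMPSet (f '' S) := by
  intro u v p hp
  have hp' : (p.map f.symm.toHom).IsMonophonic := hp.map_embedding f.symm.toEmbedding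
  have hle := hS _ hp'
  have heq : {x ∈ f '' S | x ∈ p.support} =
      f '' {y ∈ S | y ∈ (p.map f.symm.toHom).support} := by
    ext x
    simp only [Set.mem_setOf_eq, Set.mem_image, Walk.support_map, List.mem_map]
    constructor
    · rintro ⟨⟨y, hy, rfl⟩, hxs⟩
      exact ⟨y, ⟨hy, ⟨f y, hxs, by simp⟩⟩, rfl⟩
    · rintro ⟨y, ⟨hy, ⟨w, hw, hwy⟩⟩, rfl⟩
      refine ⟨⟨y, hy, rfl⟩, ?_⟩
      have hw' : w = f y := by
        rw [← hwy]
        exact (RelIso.apply_symm_apply f w).symm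
      rwa [hw'] at hw
  rw [heq, Set.ncard_image_of_injective _ f.injective]
  exact hle

end Key

end SimpleGraph

section Test
end Test

/-- If `G` and `H` are finite connected graphs, then
`mp(G □ H) ≤ max {mp(G), mp(H)}`. -/
theorem mpNum_boxProd_le_max_mpNum {α β : Type*} [Fintype α] [Fintype β]
    (G : SimpleGraph α) (H : SimpleGraph β) (hG : G.Connected) (hH : H.Connected) :
    (G □ H).mpNum ≤ max G.mpNum H.mpNum := by
  classical
  rw [SimpleGraph.mpNum]
  apply csSup_le
  · refine ⟨0, ∅, ?_, by simp⟩
    intro u v p hp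
    have : {x ∈ (∅ : Set (α × β)) | x ∈ p.support} = ∅ := by ext; simp
    simp [this]
  · rintro n ⟨M, hM, rfl⟩
    by_cases hrow : ∃ m ∈ M, ∃ m' ∈ M, m ≠ m' ∧ m.2 = m'.2
    · by_cases hcol : ∃ m ∈ M, ∃ m' ∈ M, m ≠ m' ∧ m.1 = m'.1
      · exfalso
        obtain ⟨p, hp, p', hp', hpp', hp2⟩ := hrow
        obtain ⟨q, hq, q', hq', hqq', hq1⟩ := hcol
        have hbf : q.2 ≠ q'.2 := fun h => hqq' (Prod.ext hq1 h)
        have hce : p.1 ≠ p'.1 := fun h => hpp' (Prod.ext h hp2)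
        refine SimpleGraph.config2 hG hH hM (a := q.1) (b := q.2) (f := q'.2)
          (c := p.1) (e := p'.1) (g := p.2) ?_ ?_ ?_ ?_ hbf hce
        · rwa [Prod.mk.eta]
        · rw [hq1, Prod.mk.eta]; exact hq'
        · rwa [Prod.mk.eta]
        · rw [hp2, Prod.mk.eta]; exact hp'
      · push_neg at hcol
        have hM' : (H □ G).IsMPSet (⇑(SimpleGraph.boxProdComm G H) '' M) :=
          SimpleGraph.isMPSet_map _ hM
        have hinj' : ∀ m ∈ ⇑(SimpleGraph.boxProdComm G H) '' M,
            ∀ m' ∈ ⇑(SimpleGraph.boxProdComm G H) '' M, m.2 = m'.2 → m = m' := by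
          rintro m ⟨p0, hp0, rfl⟩ m' ⟨p1, hp1, rfl⟩ h
          have h' : p0.1 = p1.1 := h
          by_contra hne
          have hne' : p0 ≠ p1 := fun hcon => hne (by rw [hcon])
          exact hcol p0 hp0 p1 hp1 hne' h'
        have hkey := SimpleGraph.key_lemma hH hM' hinj'
        rw [Set.ncard_image_of_injective _ (SimpleGraph.boxProdComm G H).injective] at hkey
        exact le_trans hkey (le_max_left _ _)
    · push_neg at hrow
      have hinj : ∀ m ∈ M, ∀ m' ∈ M, m.2 = m'.2 → m = m' := by
        intro m hm m' hm' h
        by_contra hne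
        exact hrow m hm m' hm' hne h
      exact le_trans (SimpleGraph.key_lemma hG hM hinj) (le_max_right _ _)
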